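/- arXiv:2602.21184 — 5 statements merged into one kernel-verified Lean document; each statement's English description precedes it below -/
import Mathlib

section
/- Let X be a topological space and {U_i}_{i∈I} a finite open cover of X. Let J be the poset of nonempty subsets T ⊆ I with |T| ≤ 3, ordered by reverse inclusion (T ≤ T′ iff T ⊇ T′), and let D : J → Top be the diagram sending T to U_T := ⋂_{i∈T} U_i (with the subspace topology) and each relation T ⊇ T′ to the inclusion U_T ⊆ U_{T′}. Then the cocone given by the inclusions U_T ↪ X exhibits X as the colimit of D in the category of topological spaces. -/
open CategoryTheory Topology Set Limits

/-- The index poset of nonempty subsets `T ⊆ I` with `|T| ≤ 3`, ordered by **reverse**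
inclusion: `T ≤ T′` iff `T ⊇ T′`. -/
def CoverIndex (I : Type*) : Type _ := {T : Finset I // T.Nonempty ∧ T.card ≤ 3}

instance (I : Type*) : Preorder (CoverIndex I) where
  le T T' := T'.1 ⊆ T.1
  le_refl _ _ hx := hx
  le_trans _ _ _ hab hbc _ hx := hab (hbc hx)

variable {X : Type} [TopologicalSpace X] {I : Type} (U : I → Set X)

/-- The diagram `T ↦ U_T := ⋂_{i∈T} U_i` (with the subspace topology), sending each
relation `T ⊇ T′` to the inclusion `U_T ⊆ U_{T′}`. -/
def interDiagram : CoverIndex I ⥤ TopCat where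
  obj T := TopCat.of (⋂ i ∈ T.1, U i : Set X)
  map {T T'} f :=
    TopCat.ofHom ⟨Set.inclusion (biInter_subset_biInter_left (show (T'.1 : Finset I) ⊆ T.1 from leOfHom f)),
      continuous_inclusion _⟩

/-- The cocone over `interDiagram` given by the inclusions `U_T ↪ X`. -/
def interCocone : Cocone (interDiagram U) where
  pt := TopCat.of X
  ι := { app := fun _ => TopCat.ofHom ⟨Subtype.val, continuous_subtype_val⟩ }

/-- Apply an equality of `TopCat` morphisms to a point. -/
lemma topCat_happ {A B : TopCat} {f g : A ⟶ B} (h : f = g) (x : A) : f x = g x := by rw [h]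

/-- The singleton index. -/
def singIdx (i : I) : CoverIndex I := ⟨{i}, Finset.singleton_nonempty i, by simp⟩

omit [TopologicalSpace X] in
lemma singIdx_mem {x : X} {i : I} (hi : x ∈ U i) :
    x ∈ ⋂ j ∈ (singIdx i : CoverIndex I).1, U j := by
  simp [singIdx, hi]

/-- Point compatibility: the value of a cocone leg is compatible with restriction to a
singleton subindex. -/
lemma cocone_compat (s : Cocone (interDiagram U)) (T : CoverIndex I) (x : X)
    (hx : x ∈ ⋂ i ∈ T.1, U i) {j : I} (hj : j ∈ T.1) :
    s.ι.app T ⟨x, hx⟩ =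
      s.ι.app (singIdx j) ⟨x, singIdx_mem U (by exact mem_iInter₂.1 hx j hj)⟩ := by
  have hle : T ≤ singIdx j := by
    intro a ha
    simp only [singIdx, Finset.mem_singleton] at ha
    subst ha; exact hj
  have := topCat_happ (s.w (homOfLE hle)) ⟨x, hx⟩
  exact this.symm

lemma sing_compat (s : Cocone (interDiagram U)) {i j : I} {x : X}
    (hi : x ∈ U i) (hj : x ∈ U j) :
    s.ι.app (singIdx i) ⟨x, singIdx_mem U hi⟩ =
      s.ι.app (singIdx j) ⟨x, singIdx_mem U hj⟩ := by
  classical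
  have hcard : ({i, j} : Finset I).card ≤ 3 := by
    have := Finset.card_insert_le i ({j} : Finset I)
    simp at this; omega
  set T : CoverIndex I := ⟨{i, j}, ⟨i, by simp⟩, hcard⟩ with hT
  have hx : x ∈ ⋂ k ∈ T.1, U k := by
    simp only [hT, Finset.mem_insert, Finset.mem_singleton, mem_iInter]
    rintro k (rfl | rfl) <;> assumption
  have h1 := cocone_compat U s T x hx (j := i) (by simp [hT])
  have h2 := cocone_compat U s T x hx (j := j) (by simp [hT])
  rw [← h1, ← h2]

/-- Let `X` be a topological space and `{U_i}_{i∈I}` a finite open cover.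
Then the cocone given by the inclusions `U_T ↪ X` (for nonempty `T ⊆ I`, `|T| ≤ 3`) exhibits
`X` as the colimit in `Top` of the diagram of the intersections `U_T` and their inclusions. -/
theorem interCocone_isColimit [Finite I]
    (hopen : ∀ i, IsOpen (U i)) (hcov : ⋃ i, U i = Set.univ) :
    Nonempty (IsColimit (interCocone U)) := by
  have hmem : ∀ x : X, ∃ i, x ∈ U i := fun x => by
    have : x ∈ ⋃ i, U i := hcov ▸ mem_univ x
    simpa using this
  choose idx hidx using hmem
  refine ⟨?_⟩
  refine
    { desc := fun s => TopCat.ofHom ⟨fun x => s.ι.app (singIdx (idx x)) ⟨x, singIdx_mem U (hidx x)⟩, ?_⟩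
      fac := ?_
      uniq := ?_ }
  · -- continuity
    rw [continuous_iff_continuousAt]
    intro x
    have hcont : ∀ i, ContinuousOn (Y := s.pt)
        (fun x : X => s.ι.app (singIdx (idx x)) ⟨x, singIdx_mem U (hidx x)⟩) (U i) := by
      intro i
      rw [continuousOn_iff_continuous_restrict]
      have heq : Set.restrict (U i)
          (fun x : X => s.ι.app (singIdx (idx x)) ⟨x, singIdx_mem U (hidx x)⟩) =
          (s.ι.app (singIdx i)) ∘ (fun y : U i => (⟨y.1, singIdx_mem U y.2⟩ :
            (⋂ j ∈ (singIdx i : CoverIndex I).1, U j : Set X))) := by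
        funext y
        exact sing_compat U s (hidx y.1) y.2
      change Continuous (Set.restrict (U i)
          (show X → s.pt from fun x : X => s.ι.app (singIdx (idx x)) ⟨x, singIdx_mem U (hidx x)⟩))
      rw [heq]
      exact (s.ι.app (singIdx i)).hom.continuous.comp
        (Continuous.subtype_mk continuous_subtype_val (fun y : U i => singIdx_mem U y.2))
    exact (hcont (idx x)).continuousAt ((hopen (idx x)).mem_nhds (hidx x))
  · intro s T
    ext y
    obtain ⟨j, hj⟩ := T.2.1
    have h1 := cocone_compat U s T y.1 y.2 hj
    have h2 := sing_compat U s (mem_iInter₂.1 y.2 j hj) (hidx y.1)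
    exact (h1.trans h2).symm
  · intro s m hm
    ext x
    exact topCat_happ (hm (singIdx (idx x))) ⟨x, singIdx_mem U (hidx x)⟩
end

section
/- Let S be a quasi-compact semi-separated scheme and {U_i}_{i∈I} a finite cover of S by affine open subschemes. Then for every nonempty T ⊆ I with |T| ≤ 3 the intersection U_T := ⋂_{i∈T} U_i is affine, and the cocone consisting of the composite morphisms Spec Γ(U_T, 𝒪_S) ≅ U_T ↪ S exhibits S as the colimit, in the category of locally ringed spaces, of the diagram sending each nonempty T ⊆ I with |T| ≤ 3 to Spec Γ(U_T, 𝒪_S), with the arrows for T ⊇ T′ given by Spec applied to the restriction maps Γ(U_{T′}, 𝒪_S) → Γ(U_T, 𝒪_S). -/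
open CategoryTheory Topology TopologicalSpace AlgebraicGeometry Limits Opposite

universe u

variable (S : Scheme.{u}) {I : Type} (U : I → S.Opens)

/-- The open set `U_T := ⋂_{i ∈ T} U_i`. -/
def interOpens (T : CoverIndex I) : S.Opens := T.1.inf U

/-- The diagram `T ↦ Spec Γ(U_T, 𝒪_S)`, sending each relation `T ⊇ T′` to `Spec` applied
to the restriction map `Γ(U_{T′}, 𝒪_S) ⟶ Γ(U_T, 𝒪_S)`. -/
noncomputable def specDiagram : CoverIndex I ⥤ Scheme.{u} where
  obj T := Spec (S.presheaf.obj (op (interOpens S U T)))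
  map {T T'} f := Spec.map (S.presheaf.map (homOfLE
    (Finset.inf_mono (show (T'.1 : Finset I) ⊆ T.1 from leOfHom f))).op)
  map_id T := by
    exact (congrArg Spec.map (S.presheaf.map_id (op (interOpens S U T)))).trans (Spec.map_id _)
  map_comp {T T' T''} f g := by
    rw [← Spec.map_comp]
    congr 1
    first
      | (erw [← Functor.map_comp]; rfl)
      | (simp only [← Functor.map_comp]; rfl)
      | exact (S.presheaf.map_comp _ _)

/-- The cocone over `specDiagram` given by the composites
`Spec Γ(U_T, 𝒪_S) ≅ U_T ↪ S` (i.e. the canonical maps `IsAffineOpen.fromSpec`). -/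
noncomputable def specCocone (hA : ∀ T : CoverIndex I, IsAffineOpen (interOpens S U T)) :
    Cocone (specDiagram S U) where
  pt := S
  ι :=
    { app := fun T => (hA T).fromSpec
      naturality := fun T T' f => by
        dsimp only [specDiagram]
        simp only [Functor.const_obj_map, Category.comp_id]
        exact (hA T').map_fromSpec (hA T) _ }

/-- Let `S` be a quasi-compact semi-separated scheme and `{U_i}_{i∈I}` a
finite cover of `S` by affine open subschemes.  Then every intersection
`U_T = ⋂_{i∈T} U_i` (`T ⊆ I` nonempty, `|T| ≤ 3`) is affine, and the cocone of the
composites `Spec Γ(U_T, 𝒪_S) ≅ U_T ↪ S` exhibits `S` as the colimit, in the category of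
locally ringed spaces, of the diagram `T ↦ Spec Γ(U_T, 𝒪_S)` with `Spec` of the
restriction maps as transition morphisms. -/
theorem specCocone_isColimit [Finite I] [CompactSpace S]
    (hsemisep : ∀ V W : S.Opens, IsAffineOpen V → IsAffineOpen W → IsAffineOpen (V ⊓ W))
    (haff : ∀ i, IsAffineOpen (U i)) (hcov : ∀ x : S, ∃ i, x ∈ U i) :
    ∃ hA : ∀ T : CoverIndex I, IsAffineOpen (interOpens S U T),
      Nonempty (IsColimit
        (Scheme.forgetToLocallyRingedSpace.mapCocone (specCocone S U hA))) := by
  classical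
  -- Step 1: affineness of the intersections
  have key : ∀ T : Finset I, T.Nonempty → IsAffineOpen (T.inf U) := by
    intro T hT
    induction hT using Finset.Nonempty.cons_induction with
    | singleton a => simpa using haff a
    | cons a s h hs ih => rw [Finset.inf_cons]; exact hsemisep _ _ (haff a) ih
  have hA : ∀ T : CoverIndex I, IsAffineOpen (interOpens S U T) := fun T => key T.1 T.2.1
  refine ⟨hA, ?_⟩
  -- the open cover
  have hU : (⨆ i : ULift.{u} I, U i.down) = ⊤ := by
    rw [eq_top_iff]
    intro x _
    obtain ⟨i, hi⟩ := hcov x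
    exact Opens.mem_iSup.mpr ⟨⟨i⟩, hi⟩
  let 𝒰 : S.OpenCover :=
    { I₀ := ULift.{u} I, X := fun i => U i.down, f := fun i => (U i.down).ι,
      mem₀ := (S.openCoverOfIsOpenCover (fun i : ULift.{u} I => U i.down) hU).mem₀ }
  have h𝒰map : ∀ i : ULift.{u} I, 𝒰.f i = (U i.down).ι := fun i => rfl
  have h𝒰inst : ∀ i : ULift.{u} I, IsOpenImmersion (𝒰.f i) := fun i => 𝒰.map_prop i
  -- singleton and pair indices
  let σ : ULift.{u} I → CoverIndex I := fun i =>
    ⟨{i.down}, Finset.singleton_nonempty _, by simp⟩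
  let τ : ULift.{u} I → ULift.{u} I → CoverIndex I := fun i j =>
    ⟨{i.down, j.down}, ⟨i.down, Finset.mem_insert_self _ _⟩,
      (Finset.card_insert_le _ _).trans (by simp)⟩
  have hσ : ∀ i, interOpens S U (σ i) = U i.down := fun i => Finset.inf_singleton
  have hτ : ∀ i j, interOpens S U (τ i j) = U i.down ⊓ U j.down := by
    intro i j
    show ({i.down, j.down} : Finset I).inf U = _
    rw [Finset.inf_insert, Finset.inf_singleton]
  have hτle1 : ∀ i j, (τ i j) ≤ (σ i) := by
    intro i j
    show (σ i).1 ⊆ (τ i j).1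
    exact Finset.singleton_subset_iff.mpr (Finset.mem_insert_self _ _)
  have hτle2 : ∀ i j, (τ i j) ≤ (σ j) := by
    intro i j
    show (σ j).1 ⊆ (τ i j).1
    intro x hx
    replace hx := Finset.mem_singleton.mp hx
    subst hx
    exact Finset.mem_insert_of_mem (Finset.mem_singleton_self _)
  -- scheme-level isomorphisms
  let g : ∀ i : ULift.{u} I, 𝒰.X i ≅ Spec (S.presheaf.obj (op (interOpens S U (σ i)))) :=
    fun i => IsOpenImmersion.isoOfRangeEq (𝒰.f i) (hA (σ i)).fromSpec
      (by rw [(hA (σ i)).range_fromSpec, hσ, h𝒰map]; exact Scheme.Opens.range_ι _)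
  let g2 : ∀ i j : ULift.{u} I,
      pullback (𝒰.f i) (𝒰.f j) ≅ Spec (S.presheaf.obj (op (interOpens S U (τ i j)))) :=
    fun i j => IsOpenImmersion.isoOfRangeEq (pullback.fst (𝒰.f i) (𝒰.f j) ≫ 𝒰.f i)
      (hA (τ i j)).fromSpec
      (by
        rw [IsOpenImmersion.range_pullback_to_base_of_left, (hA (τ i j)).range_fromSpec, hτ,
          h𝒰map, h𝒰map]
        exact (congrArg₂ (· ∩ ·) (Scheme.Opens.range_ι _) (Scheme.Opens.range_ι _)).trans
          (Opens.coe_inf _ _).symm)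
  have fac1 : ∀ i, (g i).hom ≫ (hA (σ i)).fromSpec = 𝒰.f i :=
    fun i => IsOpenImmersion.isoOfRangeEq_hom_fac _ _ _
  have fac2 : ∀ i j, (g2 i j).hom ≫ (hA (τ i j)).fromSpec =
      pullback.fst (𝒰.f i) (𝒰.f j) ≫ 𝒰.f i :=
    fun i j => IsOpenImmersion.isoOfRangeEq_hom_fac _ _ _
  have Fmap_fromSpec : ∀ (T T' : CoverIndex I) (f : T ⟶ T'),
      (specDiagram S U).map f ≫ (hA T').fromSpec = (hA T).fromSpec := by
    intro T T' f
    exact (hA T').map_fromSpec (hA T) _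
  -- key compatibilities at the scheme level
  have h1 : ∀ i j : ULift.{u} I, pullback.fst (𝒰.f i) (𝒰.f j) ≫ (g i).hom =
      (g2 i j).hom ≫ (specDiagram S U).map (homOfLE (hτle1 i j)) := by
    intro i j
    exact (cancel_mono (hA (σ i)).fromSpec).mp ((Category.assoc _ _ _).trans
      ((congrArg (pullback.fst (𝒰.f i) (𝒰.f j) ≫ ·) (fac1 i)).trans
      ((fac2 i j).symm.trans
      ((congrArg ((g2 i j).hom ≫ ·) (Fmap_fromSpec _ _ (homOfLE (hτle1 i j)))).symm.trans
      (Category.assoc _ _ _).symm))))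
  have h2 : ∀ i j : ULift.{u} I, (pullbackSymmetry (𝒰.f i) (𝒰.f j)).hom ≫
        pullback.fst (𝒰.f j) (𝒰.f i) ≫ (g j).hom =
      (g2 i j).hom ≫ (specDiagram S U).map (homOfLE (hτle2 i j)) := by
    intro i j
    exact (cancel_mono (hA (σ j)).fromSpec).mp
      (((Category.assoc _ _ _).trans (congrArg ((pullbackSymmetry (𝒰.f i) (𝒰.f j)).hom ≫ ·)
        ((Category.assoc _ _ _).trans (congrArg (pullback.fst (𝒰.f j) (𝒰.f i) ≫ ·) (fac1 j))))).trans
      ((pullbackSymmetry_hom_comp_fst_assoc (f := 𝒰.f i) (g := 𝒰.f j) _).trans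
      (pullback.condition.symm.trans
      ((fac2 i j).symm.trans
      ((congrArg ((g2 i j).hom ≫ ·) (Fmap_fromSpec _ _ (homOfLE (hτle2 i j)))).symm.trans
      (Category.assoc _ _ _).symm)))))
  -- glue data
  let D := 𝒰.gluedCover
  let LD := D.toLocallyRingedSpaceGlueData
  let Fo := Scheme.forgetToLocallyRingedSpace
  let ε : Fo.obj S ≅ LD.toGlueData.glued :=
    (Fo.mapIso (asIso 𝒰.fromGlued)).symm ≪≫ D.isoLocallyRingedSpace
  have eπ : ∀ i : ULift.{u} I, Multicoequalizer.π LD.toGlueData.diagram i ≫ ε.inv = Fo.map (𝒰.f i) := by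
    intro i
    show LD.toGlueData.ι i ≫
      D.isoLocallyRingedSpace.inv ≫ Fo.map 𝒰.fromGlued = Fo.map (𝒰.f i)
    erw [← Category.assoc,
      show LD.toGlueData.ι i ≫ D.isoLocallyRingedSpace.inv =
        (D.ι i).toLRSHom from D.ι_isoLocallyRingedSpace_inv i,
      show (D.ι i).toLRSHom ≫ Fo.map 𝒰.fromGlued = Fo.map (D.ι i ≫ 𝒰.fromGlued) from
        (Fo.map_comp _ _).symm,
      𝒰.ι_fromGlued i]
    rfl
  -- the descent data for an arbitrary cocone
  let β : ∀ (s : Cocone (specDiagram S U ⋙ Scheme.forgetToLocallyRingedSpace))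
      (i : ULift.{u} I), LD.toGlueData.diagram.right i ⟶ s.pt :=
    fun s i => Fo.map (g i).hom ≫ s.ι.app (σ i)
  have compat : ∀ (s : Cocone (specDiagram S U ⋙ Scheme.forgetToLocallyRingedSpace))
      (a : (ULift.{u} I) × (ULift.{u} I)),
      LD.toGlueData.diagram.fst a ≫ β s a.1 =
        LD.toGlueData.diagram.snd a ≫ β s a.2 := by
    intro s a
    obtain ⟨i, j⟩ := a
    show Fo.map (pullback.fst (𝒰.f i) (𝒰.f j)) ≫ (Fo.map (g i).hom ≫ s.ι.app (σ i)) =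
      (Fo.map ((pullbackSymmetry (𝒰.f i) (𝒰.f j)).hom) ≫
        Fo.map (pullback.fst (𝒰.f j) (𝒰.f i))) ≫ (Fo.map (g j).hom ≫ s.ι.app (σ j))
    have w1 := s.w (homOfLE (hτle1 i j))
    have w2 := s.w (homOfLE (hτle2 i j))
    calc Fo.map (pullback.fst (𝒰.f i) (𝒰.f j)) ≫ (Fo.map (g i).hom ≫ s.ι.app (σ i))
        = Fo.map (pullback.fst (𝒰.f i) (𝒰.f j) ≫ (g i).hom) ≫ s.ι.app (σ i) := by
          exact (Category.assoc _ _ _).symm.trans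
            (congrArg (· ≫ s.ι.app (σ i)) (Fo.map_comp _ _).symm)
      _ = Fo.map ((g2 i j).hom ≫ (specDiagram S U).map (homOfLE (hτle1 i j))) ≫
            s.ι.app (σ i) := by
            exact congrArg (fun f : pullback (𝒰.f i) (𝒰.f j) ⟶
              Spec (S.presheaf.obj (op (interOpens S U (σ i)))) => Fo.map f ≫ s.ι.app (σ i)) (h1 i j)
      _ = Fo.map (g2 i j).hom ≫ s.ι.app (τ i j) := by
          erw [Fo.map_comp, Category.assoc, ← w1]; rfl
      _ = Fo.map ((g2 i j).hom ≫ (specDiagram S U).map (homOfLE (hτle2 i j))) ≫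
            s.ι.app (σ j) := by
          erw [Fo.map_comp, Category.assoc, ← w2]; rfl
      _ = Fo.map ((pullbackSymmetry (𝒰.f i) (𝒰.f j)).hom ≫
            pullback.fst (𝒰.f j) (𝒰.f i) ≫ (g j).hom) ≫ s.ι.app (σ j) := by
            exact congrArg (fun f : pullback (𝒰.f i) (𝒰.f j) ⟶
              Spec (S.presheaf.obj (op (interOpens S U (σ j)))) => Fo.map f ≫ s.ι.app (σ j)) (h2 i j).symm
      _ = (Fo.map ((pullbackSymmetry (𝒰.f i) (𝒰.f j)).hom) ≫
            Fo.map (pullback.fst (𝒰.f j) (𝒰.f i))) ≫ (Fo.map (g j).hom ≫ s.ι.app (σ j)) := by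
          erw [Fo.map_comp, Fo.map_comp]
          simp only [Category.assoc]
          exact Category.assoc _ _ _
  -- the canonical map out of S for each cocone
  let desc : ∀ (s : Cocone (specDiagram S U ⋙ Scheme.forgetToLocallyRingedSpace)),
      Fo.obj S ⟶ s.pt :=
    fun s => ε.hom ≫ Multicoequalizer.desc LD.toGlueData.diagram s.pt (β s) (fun a => compat s a)
  have hπdesc : ∀ (s : Cocone (specDiagram S U ⋙ Scheme.forgetToLocallyRingedSpace))
      (i : ULift.{u} I), Multicoequalizer.π LD.toGlueData.diagram i ≫
      Multicoequalizer.desc LD.toGlueData.diagram s.pt (β s) (fun a => compat s a) = β s i :=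
    fun s i => Multicoequalizer.π_desc _ _ _ _ _
  -- facts about the cocone components
  have hfromSpec : ∀ i, (hA (σ i)).fromSpec = (g i).inv ≫ 𝒰.f i := by
    intro i
    rw [Iso.eq_inv_comp, fac1]
  have hfacσ : ∀ s i, Fo.map ((hA (σ i)).fromSpec) ≫ desc s = s.ι.app (σ i) := by
    intro s i
    show Fo.map ((hA (σ i)).fromSpec) ≫ ε.hom ≫ _ = _
    rw [hfromSpec i, Fo.map_comp, Category.assoc]
    have : Fo.map (𝒰.f i) ≫ ε.hom = Multicoequalizer.π LD.toGlueData.diagram i := by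
      exact ((Iso.comp_inv_eq ε).mp (eπ i)).symm
    exact (congrArg (Fo.map (g i).inv ≫ ·) ((Category.assoc _ _ _).symm.trans
      ((congrArg (· ≫ Multicoequalizer.desc LD.toGlueData.diagram s.pt (β s)
        (fun a => compat s a)) this).trans (hπdesc s i)))).trans
      ((Category.assoc _ _ _).symm.trans ((congrArg (· ≫ s.ι.app (σ i))
        ((Fo.map_comp _ _).symm.trans ((congrArg Fo.map (g i).inv_hom_id).trans
          (Fo.map_id _)))).trans (Category.id_comp _)))
  refine ⟨{ desc := desc, fac := ?_, uniq := ?_ }⟩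
  · intro s T
    obtain ⟨i, hi⟩ := T.2.1
    have hle : T ≤ σ ⟨i⟩ := by
      show (σ (ULift.up i)).1 ⊆ T.1
      exact Finset.singleton_subset_iff.mpr hi
    have wc := (Scheme.forgetToLocallyRingedSpace.mapCocone (specCocone S U hA)).w (homOfLE hle)
    have ws := s.w (homOfLE hle)
    have : (Scheme.forgetToLocallyRingedSpace.mapCocone (specCocone S U hA)).ι.app (σ ⟨i⟩) ≫
        desc s = s.ι.app (σ ⟨i⟩) := hfacσ s ⟨i⟩
    exact (congrArg (· ≫ desc s) wc.symm).trans ((Category.assoc _ _ _).trans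
      ((congrArg ((specDiagram S U ⋙ Scheme.forgetToLocallyRingedSpace).map (homOfLE hle) ≫ ·)
        this).trans ws))
  · intro s m hm
    have : ε.inv ≫ m = Multicoequalizer.desc LD.toGlueData.diagram s.pt (β s) (fun a => compat s a) := by
      apply Multicoequalizer.hom_ext
      intro i
      exact ((Category.assoc _ _ _).symm.trans ((congrArg (· ≫ m) (eπ i)).trans
        ((congrArg (· ≫ m) (congrArg Fo.map (fac1 i).symm)).trans
        ((congrArg (· ≫ m) (Fo.map_comp _ _)).trans ((Category.assoc _ _ _).trans
        (congrArg (Fo.map (g i).hom ≫ ·) (hm (σ i)))))))).trans (hπdesc s i).symm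
    show m = ε.hom ≫ Multicoequalizer.desc LD.toGlueData.diagram s.pt (β s) (fun a => compat s a)
    rw [← this]
    show m = ε.hom ≫ ε.inv ≫ m
    exact (ε.hom_inv_id_assoc m).symm
end

section
/- Let f : X → Y be a morphism of schemes such that f is an affine morphism and the induced morphism of sheaves 𝒪_Y → f_*𝒪_X is an isomorphism. Then f is an isomorphism of schemes. -/
open AlgebraicGeometry CategoryTheory

/-- A morphism of schemes `f : X ⟶ Y` which is affine (preimages of affine
opens are affine) and such that the induced morphism of sheaves `𝒪_Y ⟶ f_* 𝒪_X` is an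
isomorphism, is an isomorphism of schemes. -/
theorem isIso_of_isAffineHom_of_isIso_c
    {X Y : Scheme} (f : X ⟶ Y) [IsAffineHom f] (h : IsIso f.c) :
    IsIso f := by
  have happ : ∀ U : Y.Opens, IsIso (f.app U) := fun U ↦ inferInstanceAs (IsIso (f.c.app (Opposite.op U)))
  have : MorphismProperty.isomorphisms Scheme f := by
    rw [@HasAffineProperty.iff_of_iSup_eq_top _ _
      instHasAffinePropertyIsomorphismsSchemeAndIsAffineIsIsoCommRingCatAppTop _ _ f _ (fun U : Y.affineOpens ↦ U)
      (by rw [iSup_affineOpens_eq_top Y])]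
    intro U
    refine ⟨IsAffineHom.isAffine_preimage _ U.2, ?_⟩
    rw [Scheme.Hom.appTop, morphismRestrict_app]
    have := happ (U.1.ι ''ᵁ ⊤)
    exact IsIso.comp_isIso' this (Functor.map_isIso _ _)
  exact this
end

section
/- Let S be a quasi-compact semi-separated scheme and 𝒰 = {U_i}_{i∈I} a finite cover of S by affine open subschemes. For s ∈ S set U^s := ⋂{U_i : s ∈ U_i}; each U^s is an affine open subscheme of S. Let 𝒥 := {U^s : s ∈ S}, a finite set of affine opens of S, regarded as a poset under inclusion. Then the cocone consisting of the open immersions U^s ↪ S exhibits S as the colimit, in the category of locally ringed spaces, of the diagram sending each member W of 𝒥 to the open subscheme W and each inclusion W ⊆ W′ in 𝒥 to the corresponding open immersion. -/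
open CategoryTheory Topology TopologicalSpace AlgebraicGeometry Limits Opposite

universe u

variable (S : Scheme.{u}) {I : Type} [Fintype I] (U : I → S.Opens)

open Classical in
/-- For `s ∈ S`, the open set `U^s := ⋂ {U_i : s ∈ U_i}`. -/
noncomputable def Umin (s : S) : S.Opens :=
  (Finset.univ.filter (fun i => s ∈ U i)).inf U

lemma mem_finset_inf {α : Type} (F : Finset α) (V : α → S.Opens) (x : S) :
    x ∈ F.inf V ↔ ∀ i ∈ F, x ∈ V i := by
  induction F using Finset.cons_induction with
  | empty => simp
  | cons a F ha ih => rw [Finset.inf_cons]; rw [Finset.forall_mem_cons, ← ih]; exact Iff.rfl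

open Classical in
lemma mem_Umin_iff (s x : S) : x ∈ Umin S U s ↔ ∀ i, s ∈ U i → x ∈ U i := by
  simp [Umin, mem_finset_inf]

lemma self_mem_Umin (s : S) : s ∈ Umin S U s :=
  (mem_Umin_iff S U s s).2 fun _ h => h

lemma Umin_le {s x : S} (h : x ∈ Umin S U s) : Umin S U x ≤ Umin S U s := by
  intro y hy
  rw [mem_Umin_iff] at hy ⊢
  exact fun i hi => hy i ((mem_Umin_iff S U s x).1 h i hi)

lemma Umin_le_of_mem {s : S} {W : S.Opens} (hW : W ∈ Set.range (Umin S U)) (h : s ∈ W) :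
    Umin S U s ≤ W := by
  obtain ⟨t, rfl⟩ := hW
  exact Umin_le S U h

lemma isAffineOpen_finset_inf {α : Type} (F : Finset α) (hne : F.Nonempty) (V : α → S.Opens)
    (hsemisep : ∀ V W : S.Opens, IsAffineOpen V → IsAffineOpen W → IsAffineOpen (V ⊓ W))
    (haff : ∀ i, IsAffineOpen (V i)) : IsAffineOpen (F.inf V) := by
  induction hne using Finset.Nonempty.cons_induction with
  | singleton i => simpa using haff i
  | cons a F ha hF ih => rw [Finset.inf_cons]; exact hsemisep _ _ (haff a) ih

open Classical in
lemma isAffineOpen_Umin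
    (hsemisep : ∀ V W : S.Opens, IsAffineOpen V → IsAffineOpen W → IsAffineOpen (V ⊓ W))
    (haff : ∀ i, IsAffineOpen (U i)) (hcov : ∀ x : S, ∃ i, x ∈ U i) (s : S) :
    IsAffineOpen (Umin S U s) := by
  obtain ⟨i, hi⟩ := hcov s
  exact isAffineOpen_finset_inf S _ ⟨i, by simp [hi]⟩ U hsemisep (fun i => haff i)


/-- The canonical iso from the LRS gluing of an open cover back to `X`. -/
noncomputable def coverGluedIso {X : Scheme.{u}} (𝒱 : Scheme.OpenCover.{u} X) :
    𝒱.gluedCover.toLocallyRingedSpaceGlueData.toGlueData.glued ⟶ X.toLocallyRingedSpace :=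
  𝒱.gluedCover.isoLocallyRingedSpace.inv ≫ 𝒱.fromGlued.toLRSHom

lemma ι_coverGluedIso {X : Scheme.{u}} (𝒱 : Scheme.OpenCover.{u} X) (i : 𝒱.I₀) :
    𝒱.gluedCover.toLocallyRingedSpaceGlueData.toGlueData.ι i ≫ coverGluedIso 𝒱 =
      (𝒱.f i).toLRSHom := by
  rw [coverGluedIso, ← Category.assoc]
  erw [𝒱.gluedCover.ι_isoLocallyRingedSpace_inv]
  exact (Scheme.Hom.comp_toLRSHom _ _).symm.trans (congrArg Scheme.Hom.toLRSHom (𝒱.ι_fromGlued i))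

instance {X : Scheme.{u}} (𝒱 : Scheme.OpenCover.{u} X) : IsIso (coverGluedIso 𝒱) := by
  unfold coverGluedIso; infer_instance

lemma lrs_hom_ext {X : Scheme.{u}} (𝒱 : Scheme.OpenCover.{u} X) {Y : LocallyRingedSpace.{u}}
    (f g : X.toLocallyRingedSpace ⟶ Y)
    (h : ∀ i, (𝒱.f i).toLRSHom ≫ f = (𝒱.f i).toLRSHom ≫ g) : f = g := by
  rw [← cancel_epi (coverGluedIso 𝒱)]
  apply Multicoequalizer.hom_ext
  intro i
  have e := ι_coverGluedIso 𝒱 i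
  exact (Category.assoc _ _ _).symm.trans ((congrArg (· ≫ f) e).trans ((h i).trans
    ((congrArg (· ≫ g) e).symm.trans (Category.assoc _ _ _))))

noncomputable def lrsGlue {X : Scheme.{u}} (𝒱 : Scheme.OpenCover.{u} X)
    {Y : LocallyRingedSpace.{u}} (f : ∀ i, (𝒱.X i).toLocallyRingedSpace ⟶ Y)
    (hf : ∀ i j : 𝒱.I₀, (pullback.fst (𝒱.f i) (𝒱.f j)).toLRSHom ≫ f i =
      (pullback.snd (𝒱.f i) (𝒱.f j)).toLRSHom ≫ f j) :
    X.toLocallyRingedSpace ⟶ Y :=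
  inv (coverGluedIso 𝒱) ≫ Multicoequalizer.desc
    𝒱.gluedCover.toLocallyRingedSpaceGlueData.toGlueData.diagram Y f (by
    rintro ⟨i, j⟩
    change Scheme.forgetToLocallyRingedSpace.map (pullback.fst (𝒱.f i) (𝒱.f j)) ≫ f i =
      (Scheme.forgetToLocallyRingedSpace.map ((pullbackSymmetry (𝒱.f i) (𝒱.f j)).hom) ≫
        Scheme.forgetToLocallyRingedSpace.map (pullback.fst (𝒱.f j) (𝒱.f i))) ≫ f j
    rw [← Scheme.forgetToLocallyRingedSpace.map_comp, pullbackSymmetry_hom_comp_fst]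
    exact hf i j)

lemma map_lrsGlue {X : Scheme.{u}} (𝒱 : Scheme.OpenCover.{u} X)
    {Y : LocallyRingedSpace.{u}} (f : ∀ i, (𝒱.X i).toLocallyRingedSpace ⟶ Y)
    (hf : ∀ i j : 𝒱.I₀, (pullback.fst (𝒱.f i) (𝒱.f j)).toLRSHom ≫ f i =
      (pullback.snd (𝒱.f i) (𝒱.f j)).toLRSHom ≫ f j) (i : 𝒱.I₀) :
    (𝒱.f i).toLRSHom ≫ lrsGlue 𝒱 f hf = f i := by
  rw [lrsGlue, ← ι_coverGluedIso 𝒱 i]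
  exact (Category.assoc _ _ _).trans ((congrArg (_ ≫ ·) (IsIso.hom_inv_id_assoc _ _)).trans
    (Multicoequalizer.π_desc
    𝒱.gluedCover.toLocallyRingedSpaceGlueData.toGlueData.diagram Y f _ i))



/-- The open cover of `S` by the `U^s`. -/
noncomputable def UminCover : Scheme.OpenCover.{u} S :=
  Scheme.Cover.mkOfCovers {W : S.Opens // W ∈ Set.range (Umin S U)} (fun W => W.1.toScheme)
    (fun W => W.1.ι) (fun s => ⟨⟨Umin S U s, ⟨s, rfl⟩⟩, by
    rw [← Set.mem_range, Scheme.Opens.range_ι]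
    exact self_mem_Umin S U s⟩)

variable {S U}

/-- The inclusion of `U^x` into the pullback (= intersection) of two cover members
containing `x`. -/
noncomputable def pbHom (V W : {W : S.Opens // W ∈ Set.range (Umin S U)}) {x : S}
    (h1 : x ∈ V.1) (h2 : x ∈ W.1) : (Umin S U x).toScheme ⟶ pullback V.1.ι W.1.ι :=
  pullback.lift (S.homOfLE (Umin_le_of_mem S U V.2 h1)) (S.homOfLE (Umin_le_of_mem S U W.2 h2))
    (by rw [Scheme.homOfLE_ι, Scheme.homOfLE_ι])

lemma pbHom_fst (V W : {W : S.Opens // W ∈ Set.range (Umin S U)}) {x : S}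
    (h1 : x ∈ V.1) (h2 : x ∈ W.1) :
    pbHom V W h1 h2 ≫ pullback.fst V.1.ι W.1.ι = S.homOfLE (Umin_le_of_mem S U V.2 h1) :=
  pullback.lift_fst _ _ _

lemma pbHom_snd (V W : {W : S.Opens // W ∈ Set.range (Umin S U)}) {x : S}
    (h1 : x ∈ V.1) (h2 : x ∈ W.1) :
    pbHom V W h1 h2 ≫ pullback.snd V.1.ι W.1.ι = S.homOfLE (Umin_le_of_mem S U W.2 h2) :=
  pullback.lift_snd _ _ _

lemma pbHom_comp_ι (V W : {W : S.Opens // W ∈ Set.range (Umin S U)}) {x : S}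
    (h1 : x ∈ V.1) (h2 : x ∈ W.1) :
    pbHom V W h1 h2 ≫ pullback.fst V.1.ι W.1.ι ≫ V.1.ι = (Umin S U x).ι := by
  rw [← Category.assoc, pbHom_fst, Scheme.homOfLE_ι]

instance pbHom_isOpenImmersion (V W : {W : S.Opens // W ∈ Set.range (Umin S U)}) {x : S}
    (h1 : x ∈ V.1) (h2 : x ∈ W.1) : IsOpenImmersion (pbHom V W h1 h2) := by
  have h : IsOpenImmersion (pbHom V W h1 h2 ≫ pullback.fst V.1.ι W.1.ι ≫ V.1.ι) := by
    rw [pbHom_comp_ι]; infer_instance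
  exact IsOpenImmersion.of_comp _ (pullback.fst V.1.ι W.1.ι ≫ V.1.ι)

lemma mem_V_of_pb (V W : {W : S.Opens // W ∈ Set.range (Umin S U)})
    (p : ↑(pullback V.1.ι W.1.ι)) :
    (pullback.fst V.1.ι W.1.ι ≫ V.1.ι).base p ∈ V.1 := by
  rw [Scheme.Hom.comp_apply]
  have : V.1.ι.base ((pullback.fst V.1.ι W.1.ι).base p) ∈ Set.range V.1.ι.base := ⟨_, rfl⟩
  rwa [Scheme.Opens.range_ι] at this

lemma mem_W_of_pb (V W : {W : S.Opens // W ∈ Set.range (Umin S U)})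
    (p : ↑(pullback V.1.ι W.1.ι)) :
    (pullback.fst V.1.ι W.1.ι ≫ V.1.ι).base p ∈ W.1 := by
  rw [pullback.condition, Scheme.Hom.comp_apply]
  have : W.1.ι.base ((pullback.snd V.1.ι W.1.ι).base p) ∈ Set.range W.1.ι.base := ⟨_, rfl⟩
  rwa [Scheme.Opens.range_ι] at this

/-- An open cover of the pullback of two members of the cover by the `U^x`. -/
noncomputable def pbCover (V W : {W : S.Opens // W ∈ Set.range (Umin S U)}) :
    Scheme.OpenCover.{u} (pullback V.1.ι W.1.ι) :=
  Scheme.Cover.mkOfCovers ↑(pullback V.1.ι W.1.ι)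
    (fun p => (Umin S U ((pullback.fst V.1.ι W.1.ι ≫ V.1.ι).base p)).toScheme)
    (fun p => pbHom V W (mem_V_of_pb V W p) (mem_W_of_pb V W p)) (fun p => ⟨p, by
    set x := (pullback.fst V.1.ι W.1.ι ≫ V.1.ι).base p with hx
    have hinj : Function.Injective (pullback.fst V.1.ι W.1.ι ≫ V.1.ι).base :=
      (pullback.fst V.1.ι W.1.ι ≫ V.1.ι).isOpenEmbedding.injective
    obtain ⟨y, hy⟩ : x ∈ Set.range (Umin S U x).ι.base := by
      rw [Scheme.Opens.range_ι]; exact self_mem_Umin S U x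
    refine ⟨y, hinj ?_⟩
    rw [← Scheme.Hom.comp_apply, pbHom_comp_ι, hy]⟩)


variable (S U)

/-- The diagram of open subschemes indexed by the poset `𝒥 = {U^s : s ∈ S}` (ordered by
inclusion), sending each member to the corresponding open subscheme of `S` and each
inclusion to the corresponding open immersion. -/
noncomputable def UminDiagram : {W : S.Opens // W ∈ Set.range (Umin S U)} ⥤ Scheme.{u} where
  obj W := W.1.toScheme
  map {V W} f := S.homOfLE (show V.1 ≤ W.1 from leOfHom f)
  map_id V := by
    rw [← cancel_mono V.1.ι, Scheme.homOfLE_ι, Category.id_comp]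
  map_comp {V W Z} f g := by
    rw [← cancel_mono Z.1.ι, Category.assoc, Scheme.homOfLE_ι, Scheme.homOfLE_ι,
      Scheme.homOfLE_ι]

/-- The cocone over `UminDiagram` given by the open immersions `U^s ↪ S`. -/
noncomputable def UminCocone : Cocone (UminDiagram S U) where
  pt := S
  ι :=
    { app := fun W => W.1.ι
      naturality := fun V W f => by
        dsimp only [UminDiagram]
        simp only [Functor.const_obj_map, Category.comp_id]
        exact Scheme.homOfLE_ι _ _ }

variable {S U} in
lemma compat (s : Cocone (UminDiagram S U ⋙ Scheme.forgetToLocallyRingedSpace))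
    (V W : {W : S.Opens // W ∈ Set.range (Umin S U)}) :
    (pullback.fst V.1.ι W.1.ι).toLRSHom ≫ s.ι.app V =
      (pullback.snd V.1.ι W.1.ι).toLRSHom ≫ s.ι.app W := by
  apply lrs_hom_ext (pbCover V W)
  intro p
  set x := (pullback.fst V.1.ι W.1.ι ≫ V.1.ι).base p with hx
  have h1 := mem_V_of_pb V W p
  have h2 := mem_W_of_pb V W p
  set Wx : {W : S.Opens // W ∈ Set.range (Umin S U)} := ⟨Umin S U x, ⟨x, rfl⟩⟩ with hWx
  have hV : (S.homOfLE (Umin_le_of_mem S U V.2 h1)).toLRSHom ≫ s.ι.app V = s.ι.app Wx :=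
    s.w (homOfLE (Umin_le_of_mem S U V.2 h1) : Wx ⟶ V)
  have hW : (S.homOfLE (Umin_le_of_mem S U W.2 h2)).toLRSHom ≫ s.ι.app W = s.ι.app Wx :=
    s.w (homOfLE (Umin_le_of_mem S U W.2 h2) : Wx ⟶ W)
  erw [← Category.assoc, ← Category.assoc, ← Scheme.Hom.comp_toLRSHom, ← Scheme.Hom.comp_toLRSHom]
  rw [show (pbCover V W).f p ≫ pullback.fst V.1.ι W.1.ι =
      S.homOfLE (Umin_le_of_mem S U V.2 h1) from pbHom_fst V W h1 h2,
    show (pbCover V W).f p ≫ pullback.snd V.1.ι W.1.ι =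
      S.homOfLE (Umin_le_of_mem S U W.2 h2) from pbHom_snd V W h1 h2]
  exact hV.trans hW.symm


/-- Let `S` be a quasi-compact semi-separated scheme and `{U_i}_{i∈I}` a
finite cover by affine opens.  Then each `U^s = ⋂ {U_i : s ∈ U_i}` is an affine open, and
the cocone of open immersions `U^s ↪ S` exhibits `S` as the colimit, in the category of
locally ringed spaces, of the inclusion diagram of the members of `𝒥 = {U^s : s ∈ S}`. -/
theorem UminCocone_isColimit [CompactSpace S]
    (hsemisep : ∀ V W : S.Opens, IsAffineOpen V → IsAffineOpen W → IsAffineOpen (V ⊓ W))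
    (haff : ∀ i, IsAffineOpen (U i)) (hcov : ∀ x : S, ∃ i, x ∈ U i) :
    (∀ s : S, IsAffineOpen (Umin S U s)) ∧
      Nonempty (IsColimit
        (Scheme.forgetToLocallyRingedSpace.mapCocone (UminCocone S U))) := by
  refine ⟨fun s => isAffineOpen_Umin S U hsemisep haff hcov s, ⟨?_⟩⟩
  refine
    { desc := fun s => lrsGlue (UminCover S U) (fun W => s.ι.app W) (fun V W => compat s V W)
      fac := fun s W => ?_
      uniq := fun s m hm => ?_ }
  · exact map_lrsGlue (UminCover S U) (fun W => s.ι.app W) (fun V W => compat s V W) W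
  · apply lrs_hom_ext (UminCover S U)
    intro W
    rw [show ((UminCover S U).f W).toLRSHom ≫ m = s.ι.app W from hm W]
    exact (map_lrsGlue (UminCover S U) (fun W => s.ι.app W) (fun V W => compat s V W) W).symm
end

section
/- Let S be a scheme, V an affine open subscheme of S, and W₁, W₂ ⊆ V affine open subschemes such that W₁ ∩ W₂ is also affine. Then the canonical ring homomorphism Γ(W₁, 𝒪_S) ⊗_{Γ(V, 𝒪_S)} Γ(W₂, 𝒪_S) → Γ(W₁ ∩ W₂, 𝒪_S), induced by the restriction maps Γ(W₁, 𝒪_S) → Γ(W₁ ∩ W₂, 𝒪_S) and Γ(W₂, 𝒪_S) → Γ(W₁ ∩ W₂, 𝒪_S), is an isomorphism; equivalently, W₁ ∩ W₂ is the fiber product W₁ ×_V W₂ in the category of schemes and Spec(Γ(W₁, 𝒪_S) ⊗_{Γ(V, 𝒪_S)} Γ(W₂, 𝒪_S)) ≅ W₁ ∩ W₂. -/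
open AlgebraicGeometry CategoryTheory Opposite TensorProduct Limits
universe u


lemma aux {R A B C : CommRingCat.{u}} (f : R ⟶ A) (g : R ⟶ B) (inl : A ⟶ C) (inr : B ⟶ C)
    (k : R ⟶ C) (hk : k = f ≫ inl) (h : IsPushout f g inl inr) :
    letI : Algebra R A := f.hom.toAlgebra
    letI : Algebra R B := g.hom.toAlgebra
    letI : Algebra R C := k.hom.toAlgebra
    ∀ (F₁ : A →ₐ[R] C) (F₂ : B →ₐ[R] C), F₁.toRingHom = inl.hom → F₂.toRingHom = inr.hom →
    Function.Bijective (Algebra.TensorProduct.productMap F₁ F₂) := by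
  subst hk
  letI : Algebra R A := f.hom.toAlgebra
  letI : Algebra R B := g.hom.toAlgebra
  letI : Algebra R C := (f ≫ inl).hom.toAlgebra
  intro F₁ F₂ hF₁ hF₂
  have hf : CommRingCat.ofHom (algebraMap R A) = f := rfl
  have hg : CommRingCat.ofHom (algebraMap R B) = g := rfl
  have h' : IsPushout (CommRingCat.ofHom (algebraMap R A)) (CommRingCat.ofHom (algebraMap R B))
      inl inr := by rw [hf, hg]; exact h
  let P := CommRingCat.pushoutCoconeIsColimit (↑R) (↑A) (↑B)
  let Q := h'.isColimit
  let e : CommRingCat.of (A ⊗[R] B) ≅ C := P.coconePointUniqueUpToIso Q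
  let φ : CommRingCat.of (A ⊗[R] B) ⟶ C :=
    CommRingCat.ofHom (Algebra.TensorProduct.productMap F₁ F₂).toRingHom
  have key : φ = e.hom := by
    apply PushoutCocone.IsColimit.hom_ext P
    · refine Eq.trans ?_ (P.comp_coconePointUniqueUpToIso_hom Q WalkingSpan.left).symm
      ext a
      show Algebra.TensorProduct.productMap F₁ F₂ (a ⊗ₜ 1) = inl a
      rw [Algebra.TensorProduct.productMap_apply_tmul, map_one, mul_one]
      exact DFunLike.congr_fun hF₁ a
    · refine Eq.trans ?_ (P.comp_coconePointUniqueUpToIso_hom Q WalkingSpan.right).symm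
      ext b
      show Algebra.TensorProduct.productMap F₁ F₂ (1 ⊗ₜ b) = inr b
      rw [Algebra.TensorProduct.productMap_apply_tmul, map_one, one_mul]
      exact DFunLike.congr_fun hF₂ b
  have : IsIso φ := by rw [key]; infer_instance
  exact ConcreteCategory.bijective_of_isIso φ

lemma aux' {S : Scheme.{u}} (V W₁ W₂ : S.Opens) (hV : IsAffineOpen V)
    (hW₁ : IsAffineOpen W₁) (hW₂ : IsAffineOpen W₂)
    (h₁ : W₁ ≤ V) (h₂ : W₂ ≤ V) (hW : IsAffineOpen (W₁ ⊓ W₂)) :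
    IsPushout (S.presheaf.map (homOfLE h₁).op) (S.presheaf.map (homOfLE h₂).op)
      (S.presheaf.map (homOfLE (inf_le_left : W₁ ⊓ W₂ ≤ W₁)).op)
      (S.presheaf.map (homOfLE (inf_le_right : W₁ ⊓ W₂ ≤ W₂)).op) := by
  have key : ∀ {U U' : S.Opens} (hU : IsAffineOpen U) (hU' : IsAffineOpen U') (le : U ≤ U'),
      S.homOfLE le ≫ hU'.isoSpec.hom =
        hU.isoSpec.hom ≫ Spec.map (S.presheaf.map (homOfLE le).op) := by
    intro U U' hU hU' le
    have e1 : Spec.map (S.presheaf.map (homOfLE le).op) ≫ hU'.isoSpec.inv =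
        hU.isoSpec.inv ≫ S.homOfLE le := by
      rw [← cancel_mono U'.ι, Category.assoc, Category.assoc, hU'.isoSpec_inv_ι,
        Scheme.homOfLE_ι, hU.isoSpec_inv_ι]
      exact hU'.map_fromSpec hU (homOfLE le).op
    rw [← cancel_epi hU.isoSpec.inv, ← Category.assoc, ← e1]
    simp
  have hsq : IsPullback
      (Spec.map (S.presheaf.map (homOfLE (inf_le_left : W₁ ⊓ W₂ ≤ W₁)).op))
      (Spec.map (S.presheaf.map (homOfLE (inf_le_right : W₁ ⊓ W₂ ≤ W₂)).op))
      (Spec.map (S.presheaf.map (homOfLE h₁).op))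
      (Spec.map (S.presheaf.map (homOfLE h₂).op)) :=
    (isPullback_opens_inf_le h₁ h₂).of_iso hW.isoSpec hW₁.isoSpec hW₂.isoSpec hV.isoSpec
      (key hW hW₁ inf_le_left) (key hW hW₂ inf_le_right) (key hW₁ hV h₁) (key hW₂ hV h₂)
  have hpull : IsPullback (S.presheaf.map (homOfLE (inf_le_left : W₁ ⊓ W₂ ≤ W₁)).op).op
      (S.presheaf.map (homOfLE (inf_le_right : W₁ ⊓ W₂ ≤ W₂)).op).op
      (S.presheaf.map (homOfLE h₁).op).op (S.presheaf.map (homOfLE h₂).op).op :=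
    IsPullback.of_map_of_faithful (F := Scheme.Spec) hsq
  exact hpull.unop.flip

/-- Let `S` be a scheme, `V` an affine open and `W₁, W₂ ⊆ V` affine opens
with `W₁ ∩ W₂` affine.  Then the canonical ring homomorphism
`Γ(W₁) ⊗_{Γ(V)} Γ(W₂) → Γ(W₁ ∩ W₂)` induced by the restriction maps is an isomorphism
(all `Γ(V)`-algebra structures coming from the restriction maps). -/
theorem affine_inter_tensorProduct_bijective
    {S : Scheme} (V W₁ W₂ : S.Opens) (hV : IsAffineOpen V)
    (hW₁ : IsAffineOpen W₁) (hW₂ : IsAffineOpen W₂)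
    (h₁ : W₁ ≤ V) (h₂ : W₂ ≤ V) (hW : IsAffineOpen (W₁ ⊓ W₂)) :
    letI : Algebra (S.presheaf.obj (op V)) (S.presheaf.obj (op W₁)) :=
      (S.presheaf.map (homOfLE h₁).op).hom.toAlgebra
    letI : Algebra (S.presheaf.obj (op V)) (S.presheaf.obj (op W₂)) :=
      (S.presheaf.map (homOfLE h₂).op).hom.toAlgebra
    letI : Algebra (S.presheaf.obj (op V)) (S.presheaf.obj (op (W₁ ⊓ W₂))) :=
      (S.presheaf.map (homOfLE (inf_le_left.trans h₁)).op).hom.toAlgebra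
    ∀ (F₁ : (S.presheaf.obj (op W₁)) →ₐ[S.presheaf.obj (op V)] (S.presheaf.obj (op (W₁ ⊓ W₂))))
      (F₂ : (S.presheaf.obj (op W₂)) →ₐ[S.presheaf.obj (op V)] (S.presheaf.obj (op (W₁ ⊓ W₂)))),
      F₁.toRingHom = (S.presheaf.map (homOfLE (inf_le_left : W₁ ⊓ W₂ ≤ W₁)).op).hom →
      F₂.toRingHom = (S.presheaf.map (homOfLE (inf_le_right : W₁ ⊓ W₂ ≤ W₂)).op).hom →
      Function.Bijective (Algebra.TensorProduct.productMap F₁ F₂) := by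
  exact aux _ _ _ _ _ (by rw [← Functor.map_comp]; rfl)
    (aux' V W₁ W₂ hV hW₁ hW₂ h₁ h₂ hW)
end
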